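/- Let X be a standard normal random variable with distribution function Φ and let S be a nonnegative random variable with distribution function F, independent of X, such that F has upper endpoint 1 and S is not almost surely 0. Then for every s ∈ (0,1), P(SX > u) ~ ∫_s^1 (1 − Φ(u/x)) dF(x) as u → ∞, where ~ denotes that the ratio of the two sides tends to 1. -/

import Mathlib

open MeasureTheory ProbabilityTheory Filter

noncomputable section

/-- The Gumbel distribution function `Λ(x) = exp(-exp(-x))`. -/
def gumbel (x : ℝ) : ℝ := Real.exp (-Real.exp (-x))

/-- Distribution function of a real random variable. -/
def df {Ω : Type*} [MeasurableSpace Ω] (μ : Measure Ω) (Y : Ω → ℝ) : ℝ → ℝ :=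
  fun x => (μ {ω | Y ω ≤ x}).toReal

/-- Survival function of a real random variable. -/
def surv {Ω : Type*} [MeasurableSpace Ω] (μ : Measure Ω) (Y : Ω → ℝ) (u : ℝ) : ℝ :=
  (μ {ω | u < Y ω}).toReal

/-- Generalised inverse `G⁻¹(p) = inf {x : G x ≥ p}`. -/
def genInv (G : ℝ → ℝ) (p : ℝ) : ℝ := sInf {x : ℝ | p ≤ G x}

/-- The standard normal distribution function `Φ`. -/
def stdNormalCDF (x : ℝ) : ℝ := ((gaussianReal 0 1) (Set.Iic x)).toReal

/-- The distribution of `S` has upper endpoint `1`. -/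
def HasUpperEndpointOne {Ω : Type*} [MeasurableSpace Ω] (μ : Measure Ω) (S : Ω → ℝ) : Prop :=
  (∀ᵐ ω ∂μ, S ω ≤ 1) ∧ ∀ s : ℝ, s < 1 → 0 < μ {ω | s < S ω}

/-- The survival function of `S` is regularly varying at `1` with index `γ`. -/
def RegVarAtOne {Ω : Type*} [MeasurableSpace Ω] (μ : Measure Ω) (S : Ω → ℝ) (γ : ℝ) : Prop :=
  ∀ t : ℝ, 0 < t →
    Tendsto (fun u : ℝ => surv μ S (1 - t / u) / surv μ S (1 - 1 / u)) atTop (nhds (t ^ γ))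

/-- Assumption A of Hashorva and Weng, with explicit bounding variables `Sg` (index `γ`),
`St` (index `τ`) and threshold `ν ∈ (0,1)`. -/
def AssumptionA {Ω : Type*} [MeasurableSpace Ω] (μ : Measure Ω)
    (S Sg St : Ω → ℝ) (γ τ ν : ℝ) : Prop :=
  0 ≤ γ ∧ 0 ≤ τ ∧ ν ∈ Set.Ioo (0:ℝ) 1 ∧
  (∀ᵐ ω ∂μ, 0 ≤ S ω) ∧ HasUpperEndpointOne μ S ∧
  (∀ᵐ ω ∂μ, 0 ≤ Sg ω) ∧ (∀ᵐ ω ∂μ, 0 ≤ St ω) ∧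
  RegVarAtOne μ Sg γ ∧ RegVarAtOne μ St τ ∧
  ∀ u ∈ Set.Ioo ν (1:ℝ),
    μ {ω | u < S ω} ≤ μ {ω | u < St ω} ∧ μ {ω | u < Sg ω} ≤ μ {ω | u < S ω}

/-- `X_n, n ≥ 1` is a standard stationary Gaussian sequence with correlation function
`ρ` (`ρ 0 = 1`, `ρ n = E[X_1 X_{n+1}]`): every finite linear combination of the `X_i`,
`i ≥ 1`, is a centered Gaussian with variance given by the covariances `ρ (|i - j|)`. -/
def IsStdStationaryGaussianSeq {Ω : Type*} [MeasurableSpace Ω] (μ : Measure Ω)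
    (X : ℕ → Ω → ℝ) (ρ : ℕ → ℝ) : Prop :=
  (∀ i, Measurable (X i)) ∧ ρ 0 = 1 ∧
  ∀ (m : ℕ) (c : Fin m → ℝ) (k : ℕ),
    Measure.map (fun ω => ∑ i : Fin m, c i * X (k + 1 + (i : ℕ)) ω) μ
      = gaussianReal 0
          (Real.toNNReal (∑ i : Fin m, ∑ j : Fin m,
            c i * c j * ρ (((i : ℕ) : ℤ) - ((j : ℕ) : ℤ)).natAbs))

/-- `M_n^* = max_{1 ≤ i ≤ n} S_i X_i` (junk value `0` for `n = 0`). -/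
def Mstar {Ω : Type*} (S X : ℕ → Ω → ℝ) : ℕ → Ω → ℝ
  | 0 => fun _ => 0
  | 1 => fun ω => S 1 ω * X 1 ω
  | (n + 2) => fun ω => max (Mstar S X (n + 1) ω) (S (n + 2) ω * X (n + 2) ω)

/-- `H ∈ GMDA(w)`: Gumbel max-domain of attraction with positive scaling function `w`. -/
def GMDA (H : ℝ → ℝ) (w : ℝ → ℝ) : Prop :=
  (∀ u, 0 < w u) ∧
  ∀ x : ℝ, 0 ≤ x →
    Tendsto (fun u : ℝ => (1 - H (u + x / w u)) / (1 - H u)) atTop (nhds (Real.exp (-x)))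

namespace TailEquivAux

open Set Real

lemma pdf01 (x : ℝ) : gaussianPDFReal 0 1 x = (Real.sqrt (2*π))⁻¹ * Real.exp (-x^2/2) := by
  simp [gaussianPDFReal]

lemma gauss_set (t : Set ℝ) :
    gaussianReal 0 1 t = ENNReal.ofReal (∫ x in t, gaussianPDFReal 0 1 x) :=
  gaussianReal_apply_eq_integral 0 one_ne_zero t

lemma gauss_toReal (t : Set ℝ) :
    (gaussianReal 0 1 t).toReal = ∫ x in t, gaussianPDFReal 0 1 x := by
  rw [gauss_set, ENNReal.toReal_ofReal]
  exact integral_nonneg fun x => gaussianPDFReal_nonneg _ _ _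

lemma tail_eq (v : ℝ) : (gaussianReal 0 1 (Set.Ioi v)).toReal = 1 - stdNormalCDF v := by
  have h : gaussianReal 0 1 (Set.Iic v) + gaussianReal 0 1 (Set.Ioi v) = 1 := by
    rw [← measure_union (Set.Iic_disjoint_Ioi le_rfl) measurableSet_Ioi, Set.Iic_union_Ioi,
      measure_univ]
  have h1 : gaussianReal 0 1 (Set.Iic v) ≠ ⊤ := measure_ne_top _ _
  have h2 : gaussianReal 0 1 (Set.Ioi v) ≠ ⊤ := measure_ne_top _ _
  have h3 := congrArg ENNReal.toReal h
  rw [ENNReal.toReal_add h1 h2] at h3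
  simp only [ENNReal.toReal_one] at h3
  rw [stdNormalCDF]
  linarith

lemma tail_lower {v : ℝ} (hv : 0 ≤ v) :
    (Real.sqrt (2*π))⁻¹ * Real.exp (-(v+1)^2/2)
      ≤ (gaussianReal 0 1 (Set.Ioi v)).toReal := by
  rw [gauss_toReal]
  have hsub : ∫ x in Set.Ioc v (v+1), gaussianPDFReal 0 1 x
      ≤ ∫ x in Set.Ioi v, gaussianPDFReal 0 1 x := by
    refine setIntegral_mono_set (integrable_gaussianPDFReal 0 1).integrableOn ?_ ?_
    · exact Filter.Eventually.of_forall fun x => gaussianPDFReal_nonneg _ _ _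
    · exact Filter.Eventually.of_forall Set.Ioc_subset_Ioi_self
  refine le_trans ?_ hsub
  have hvol : volume (Set.Ioc v (v+1)) ≠ ⊤ := by simp
  have hconst := setIntegral_ge_of_const_le (μ := volume)
    (c := (Real.sqrt (2*π))⁻¹ * Real.exp (-(v+1)^2/2)) measurableSet_Ioc hvol
    (fun x hx => by
      rw [pdf01]
      have hx1 : x^2 ≤ (v+1)^2 := by nlinarith [hx.1, hx.2]
      have := Real.exp_le_exp.mpr (show -(v+1)^2/2 ≤ -x^2/2 by linarith)
      have hs : (0:ℝ) ≤ (Real.sqrt (2*π))⁻¹ := inv_nonneg.mpr (Real.sqrt_nonneg _)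
      exact mul_le_mul_of_nonneg_left this hs)
    (integrable_gaussianPDFReal 0 1).integrableOn
  have hvol2 : (volume (Set.Ioc v (v+1))).toReal = 1 := by
    rw [Real.volume_Ioc]
    simp
  rwa [measureReal_def, hvol2, smul_eq_mul, one_mul] at hconst

lemma one_le_sqrt_two_pi : (1:ℝ) ≤ Real.sqrt (2*π) := by
  rw [show (1:ℝ) = Real.sqrt 1 by simp]
  exact Real.sqrt_le_sqrt (by nlinarith [Real.pi_gt_three])

lemma tail_pos {v : ℝ} (hv : 0 ≤ v) : 0 < 1 - stdNormalCDF v := by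
  rw [← tail_eq]
  refine lt_of_lt_of_le ?_ (tail_lower hv)
  have h1 : (0:ℝ) < Real.sqrt (2*π) := lt_of_lt_of_le one_pos one_le_sqrt_two_pi
  positivity

lemma tail_upper {v : ℝ} (hv : 1 ≤ v) :
    (gaussianReal 0 1 (Set.Ioi v)).toReal ≤ Real.exp (-v^2/2) := by
  rw [gauss_toReal]
  have hInt : IntegrableOn
      (fun x => (Real.sqrt (2*π))⁻¹ * Real.exp (-v^2/2) * Real.exp v * Real.exp (-1 * x))
      (Set.Ioi v) :=
    (exp_neg_integrableOn_Ioi v one_pos).const_mul _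
  have hmono : ∫ x in Set.Ioi v, gaussianPDFReal 0 1 x
      ≤ ∫ x in Set.Ioi v,
          (Real.sqrt (2*π))⁻¹ * Real.exp (-v^2/2) * Real.exp v * Real.exp (-1 * x) := by
    refine setIntegral_mono_on (integrable_gaussianPDFReal 0 1).integrableOn hInt
      measurableSet_Ioi ?_
    intro x hx
    rw [pdf01, mul_assoc, mul_assoc, ← Real.exp_add, ← Real.exp_add]
    have hx' : v < x := hx
    have hexp : -x^2/2 ≤ -v^2/2 + (v + -1 * x) := by nlinarith
    exact mul_le_mul_of_nonneg_left (Real.exp_le_exp.mpr hexp)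
      (inv_nonneg.mpr (Real.sqrt_nonneg _))
  refine hmono.trans ?_
  rw [integral_const_mul]
  have : ∫ x in Set.Ioi v, Real.exp (-1 * x) = Real.exp (-v) := by
    simp_rw [neg_one_mul]
    exact integral_exp_neg_Ioi v
  rw [this, mul_assoc, mul_assoc, ← Real.exp_add, ← Real.exp_add]
  have h2 : -v^2/2 + (v + -v) = -v^2/2 := by ring
  rw [h2]
  have h3 : (Real.sqrt (2*π))⁻¹ ≤ 1 := by
    rw [inv_le_one_iff₀]
    right; exact one_le_sqrt_two_pi
  nlinarith [Real.exp_pos (-v^2/2)]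

lemma stdNormalCDF_mono : Monotone stdNormalCDF := fun a b hab =>
  ENNReal.toReal_mono (measure_ne_top _ _) (measure_mono (Set.Iic_subset_Iic.2 hab))

lemma stdNormalCDF_nonneg (x : ℝ) : 0 ≤ stdNormalCDF x := ENNReal.toReal_nonneg

lemma stdNormalCDF_le_one (x : ℝ) : stdNormalCDF x ≤ 1 := by
  rw [stdNormalCDF]
  have := prob_le_one (μ := gaussianReal 0 1) (s := Set.Iic x)
  exact ENNReal.toReal_le_of_le_ofReal one_pos.le (by simpa using this)

end TailEquivAux

/-- asymptotic equivalence of the tail of `SX` with the truncated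
Stieltjes integral `∫_s^1 (1 - Φ(u/x)) dF(x)`. -/
theorem tail_equiv_truncated_integral
    {Ω : Type*} [MeasurableSpace Ω] (μ : Measure Ω) [IsProbabilityMeasure μ]
    (X S : Ω → ℝ)
    (hXmeas : Measurable X) (hSmeas : Measurable S)
    (hXgauss : Measure.map X μ = gaussianReal 0 1)
    (hSXindep : IndepFun S X μ)
    (hSnonneg : ∀ᵐ ω ∂μ, 0 ≤ S ω)
    (hupper : HasUpperEndpointOne μ S)
    (hSne0 : ¬ (∀ᵐ ω ∂μ, S ω = 0)) :
    ∀ s ∈ Set.Ioo (0 : ℝ) 1,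
      Tendsto (fun u : ℝ =>
          (μ {ω | u < S ω * X ω}).toReal /
            ∫ x in Set.Ioc s 1, (1 - stdNormalCDF (u / x)) ∂(Measure.map S μ))
        atTop (nhds 1) := by
  intro s hs
  obtain ⟨hs0, hs1⟩ := hs
  set s' : ℝ := (s+1)/2 with hs'def
  have hss' : s < s' := by rw [hs'def]; linarith
  have hs'1 : s' < 1 := by rw [hs'def]; linarith
  have hs'0 : 0 < s' := by linarith
  set ν := Measure.map S μ with hν
  have hνprob : IsProbabilityMeasure ν := Measure.isProbabilityMeasure_map hSmeas.aemeasurable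
  have hν_apply : ∀ t : Set ℝ, MeasurableSet t → ν t = μ (S ⁻¹' t) := fun t ht =>
    Measure.map_apply hSmeas ht
  have hν_ae : ∀ᵐ x ∂ν, x ∈ Set.Icc (0:ℝ) 1 := by
    have hae : ∀ᵐ ω ∂μ, S ω ∈ Set.Icc (0:ℝ) 1 := by
      filter_upwards [hSnonneg, hupper.1] with ω h1 h2 using ⟨h1, h2⟩
    rw [hν]
    exact (MeasureTheory.ae_map_iff hSmeas.aemeasurable measurableSet_Icc).mpr hae
  -- properties of the integrand
  set f : ℝ → ℝ → ℝ := fun u x => 1 - stdNormalCDF (u / x) with hfdef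
  have hfmeas : ∀ u, Measurable (f u) := fun u =>
    measurable_const.sub (TailEquivAux.stdNormalCDF_mono.measurable.comp
      (measurable_const.div measurable_id))
  have hf0 : ∀ u x, 0 ≤ f u x := fun u x => by
    have := TailEquivAux.stdNormalCDF_le_one (u / x); simp only [hfdef]; linarith
  have hf1 : ∀ u x, f u x ≤ 1 := fun u x => by
    have := TailEquivAux.stdNormalCDF_nonneg (u / x); simp only [hfdef]; linarith
  have hfint : ∀ (u : ℝ) (t : Set ℝ), IntegrableOn (f u) t ν := by
    intro u t
    refine Integrable.mono' (integrable_const 1) ((hfmeas u).aestronglyMeasurable) ?_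
    filter_upwards with x
    rw [Real.norm_eq_abs, abs_le]
    exact ⟨by linarith [hf0 u x], hf1 u x⟩
  set A : ℝ → ℝ := fun u => ∫ x in Set.Ioc 0 s, f u x ∂ν with hAdef
  set B : ℝ → ℝ := fun u => ∫ x in Set.Ioc s 1, f u x ∂ν with hBdef
  -- numerator formula
  have hnum : ∀ u : ℝ, 0 < u → (μ {ω | u < S ω * X ω}).toReal = A u + B u := by
    intro u hu
    have hsetm : MeasurableSet {p : ℝ × ℝ | u < p.1 * p.2} :=
      measurableSet_lt measurable_const (measurable_fst.mul measurable_snd)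
    have hmap : Measure.map (fun ω => (S ω, X ω)) μ = ν.prod (gaussianReal 0 1) := by
      rw [← hXgauss, hν]
      exact (indepFun_iff_map_prod_eq_prod_map_map hSmeas.aemeasurable
        hXmeas.aemeasurable).mp hSXindep
    have h1 : μ {ω | u < S ω * X ω} = (ν.prod (gaussianReal 0 1)) {p : ℝ × ℝ | u < p.1 * p.2} := by
      rw [← hmap, Measure.map_apply (hSmeas.prodMk hXmeas) hsetm]
      rfl
    rw [h1, Measure.prod_apply hsetm]
    have h2 : ∫⁻ x, gaussianReal 0 1 (Prod.mk x ⁻¹' {p : ℝ × ℝ | u < p.1 * p.2}) ∂ν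
        = ∫⁻ x, Set.indicator (Set.Ioc (0:ℝ) 1) (fun x => ENNReal.ofReal (f u x)) x ∂ν := by
      refine lintegral_congr_ae ?_
      filter_upwards [hν_ae] with x hx
      rcases eq_or_lt_of_le hx.1 with h0 | h0
      · have he : Prod.mk x ⁻¹' {p : ℝ × ℝ | u < p.1 * p.2} = ∅ := by
          ext y
          simp only [Set.mem_preimage, Set.mem_setOf_eq, Set.mem_empty_iff_false, iff_false,
            not_lt, ← h0, zero_mul]
          exact hu.le
        have hnm : x ∉ Set.Ioc (0:ℝ) 1 := fun hmem => absurd hmem.1 (by rw [← h0]; exact lt_irrefl 0)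
        rw [he, Set.indicator_of_notMem hnm]
        simp
      · have hmem : x ∈ Set.Ioc (0:ℝ) 1 := ⟨h0, hx.2⟩
        rw [Set.indicator_of_mem hmem]
        have hpre : Prod.mk x ⁻¹' {p : ℝ × ℝ | u < p.1 * p.2} = Set.Ioi (u / x) := by
          ext y
          simp only [Set.mem_preimage, Set.mem_setOf_eq, Set.mem_Ioi, div_lt_iff₀ h0]
          constructor <;> intro h <;> nlinarith
        have hfx : f u x = 1 - stdNormalCDF (u / x) := rfl
        rw [hpre, hfx, ← TailEquivAux.tail_eq (u / x),
          ENNReal.ofReal_toReal (measure_ne_top _ _)]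
    rw [h2, lintegral_indicator measurableSet_Ioc]
    have h3 : (∫⁻ x in Set.Ioc (0:ℝ) 1, ENNReal.ofReal (f u x) ∂ν).toReal
        = ∫ x in Set.Ioc (0:ℝ) 1, f u x ∂ν := by
      rw [integral_eq_lintegral_of_nonneg_ae (Filter.Eventually.of_forall fun x => hf0 u x)
        ((hfmeas u).aestronglyMeasurable)]
    rw [h3, ← Set.Ioc_union_Ioc_eq_Ioc hs0.le hs1.le,
      setIntegral_union (Set.Ioc_disjoint_Ioc_of_le le_rfl) measurableSet_Ioc (hfint u _) (hfint u _)]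
  -- denominator lower bound
  set c : ℝ := (ν (Set.Ioc s' 1)).toReal with hcdef
  have hc : 0 < c := by
    have h1 : ν (Set.Ioi 1) = 0 := by
      rw [hν_apply _ measurableSet_Ioi]
      have : S ⁻¹' Set.Ioi 1 = {ω | ¬ S ω ≤ 1} := by ext ω; simp [not_le]
      rw [this]
      exact ae_iff.mp hupper.1
    have h2 : 0 < ν (Set.Ioi s') := by
      rw [hν_apply _ measurableSet_Ioi]
      exact hupper.2 s' hs'1
    have h3 : ν (Set.Ioi s') ≤ ν (Set.Ioc s' 1) := by
      calc ν (Set.Ioi s') ≤ ν (Set.Ioc s' 1 ∪ Set.Ioi 1) := by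
            refine measure_mono fun x hx => ?_
            rcases le_or_gt x 1 with h | h
            · exact Or.inl ⟨hx, h⟩
            · exact Or.inr h
        _ ≤ ν (Set.Ioc s' 1) + ν (Set.Ioi 1) := measure_union_le _ _
        _ = ν (Set.Ioc s' 1) := by rw [h1, add_zero]
    exact ENNReal.toReal_pos (lt_of_lt_of_le h2 h3).ne' (measure_ne_top _ _)
  have hBlow : ∀ u : ℝ, 0 ≤ u → c * (1 - stdNormalCDF (u / s')) ≤ B u := by
    intro u hu
    have hsub : ∫ x in Set.Ioc s' 1, f u x ∂ν ≤ B u := by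
      refine setIntegral_mono_set (hfint u _) ?_ ?_
      · exact Filter.Eventually.of_forall fun x => hf0 u x
      · exact Filter.Eventually.of_forall (Set.Ioc_subset_Ioc_left hss'.le)
    refine le_trans ?_ hsub
    have := setIntegral_ge_of_const_le (μ := ν) (c := 1 - stdNormalCDF (u / s'))
      (s := Set.Ioc s' 1) (f := f u) measurableSet_Ioc (measure_ne_top _ _)
      (fun x hx => by
        have hdiv : u / x ≤ u / s' := by
          apply div_le_div_of_nonneg_left hu hs'0
          exact hx.1.le
        have h2 := TailEquivAux.stdNormalCDF_mono hdiv
        show 1 - stdNormalCDF (u / s') ≤ 1 - stdNormalCDF (u / x)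
        linarith)
      (hfint u _)
    rw [measureReal_def, smul_eq_mul] at this
    exact this
  have hBpos : ∀ u : ℝ, 0 ≤ u → 0 < B u := by
    intro u hu
    refine lt_of_lt_of_le ?_ (hBlow u hu)
    exact mul_pos hc (TailEquivAux.tail_pos (div_nonneg hu hs'0.le))
  -- A upper bound
  have hAup : ∀ u : ℝ, 0 ≤ u → A u ≤ 1 - stdNormalCDF (u / s) := by
    intro u hu
    have h1 : A u ≤ ∫ _x in Set.Ioc (0:ℝ) s, f u s ∂ν := by
      refine setIntegral_mono_on (hfint u _) (integrableOn_const (measure_ne_top _ _))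
        measurableSet_Ioc ?_
      intro x hx
      have hdiv : u / s ≤ u / x := div_le_div_of_nonneg_left hu hx.1 hx.2
      have h2 := TailEquivAux.stdNormalCDF_mono hdiv
      have hfx : f u x = 1 - stdNormalCDF (u / x) := rfl
      have hfs : f u s = 1 - stdNormalCDF (u / s) := rfl
      rw [hfx, hfs]; linarith
    refine h1.trans ?_
    rw [setIntegral_const, measureReal_def, smul_eq_mul]
    have hm : (ν (Set.Ioc (0:ℝ) s)).toReal ≤ 1 := by
      refine ENNReal.toReal_le_of_le_ofReal one_pos.le ?_
      simpa using prob_le_one (μ := ν) (s := Set.Ioc (0:ℝ) s)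
    have hfs : f u s = 1 - stdNormalCDF (u / s) := rfl
    rw [hfs]
    nlinarith [TailEquivAux.stdNormalCDF_nonneg (u/s), TailEquivAux.stdNormalCDF_le_one (u/s),
      ENNReal.toReal_nonneg (a := ν (Set.Ioc (0:ℝ) s))]
  have hA0 : ∀ u : ℝ, 0 ≤ A u := fun u =>
    setIntegral_nonneg measurableSet_Ioc fun x _ => hf0 u x
  -- the dominating function g
  set g : ℝ → ℝ := fun u =>
    Real.sqrt (2*Real.pi) / c * Real.exp (((u/s'+1)^2 - (u/s)^2)/2) with hgdef
  have hsqrt_pos : (0:ℝ) < Real.sqrt (2*Real.pi) :=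
    lt_of_lt_of_le one_pos TailEquivAux.one_le_sqrt_two_pi
  have hg_nonneg : ∀ u, 0 ≤ g u := fun u => by
    have := Real.exp_pos (((u/s'+1)^2 - (u/s)^2)/2)
    positivity
  have hg0 : Tendsto g atTop (nhds 0) := by
    have hk : (1/s'^2 - 1/s^2)/2 < 0 := by
      have h1 : (0:ℝ) < s^2 := by positivity
      have h2 : (0:ℝ) < s'^2 := by positivity
      have : 1/s'^2 < 1/s^2 := by
        apply div_lt_div_of_pos_left one_pos h1
        nlinarith
      linarith
    have hE : Tendsto (fun u : ℝ => ((u/s'+1)^2 - (u/s)^2)/2) atTop atBot := by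
      have heq : (fun u : ℝ => ((u/s'+1)^2 - (u/s)^2)/2)
          = fun u : ℝ => u * (((1/s'^2 - 1/s^2)/2) * u + 1/s') + 1/2 := by
        funext u
        field_simp
        ring
      rw [heq]
      apply tendsto_atBot_add_const_right
      apply Tendsto.atTop_mul_atBot₀ tendsto_id
      apply tendsto_atBot_add_const_right
      exact Tendsto.const_mul_atTop_of_neg hk tendsto_id
    have hexp : Tendsto (fun u : ℝ => Real.exp (((u/s'+1)^2 - (u/s)^2)/2)) atTop (nhds 0) :=
      Real.tendsto_exp_atBot.comp hE
    have := hexp.const_mul (Real.sqrt (2*Real.pi) / c)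
    simpa [hgdef] using this
  -- the key bound : A u / B u ≤ g u eventually
  have hkey : ∀ᶠ u in atTop, A u / B u ≤ g u := by
    filter_upwards [eventually_ge_atTop (1:ℝ)] with u hu
    have hu0 : (0:ℝ) ≤ u := by linarith
    rw [div_le_iff₀ (hBpos u hu0)]
    have hus : 1 ≤ u / s := by
      rw [le_div_iff₀ hs0]
      nlinarith
    have step1 : A u ≤ Real.exp (-(u/s)^2/2) := by
      refine (hAup u hu0).trans ?_
      rw [← TailEquivAux.tail_eq]
      exact TailEquivAux.tail_upper hus
    have step2 : c * ((Real.sqrt (2*Real.pi))⁻¹ * Real.exp (-(u/s'+1)^2/2)) ≤ B u := by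
      refine le_trans ?_ (hBlow u hu0)
      have htl : (Real.sqrt (2*Real.pi))⁻¹ * Real.exp (-(u/s'+1)^2/2)
          ≤ 1 - stdNormalCDF (u/s') := by
        rw [← TailEquivAux.tail_eq]
        exact TailEquivAux.tail_lower (div_nonneg hu0 hs'0.le)
      exact mul_le_mul_of_nonneg_left htl hc.le
    have hg_eq : g u * (c * ((Real.sqrt (2*Real.pi))⁻¹ * Real.exp (-(u/s'+1)^2/2)))
        = Real.exp (-(u/s)^2/2) := by
      have h1 : Real.exp (((u/s'+1)^2 - (u/s)^2)/2) * Real.exp (-(u/s'+1)^2/2)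
          = Real.exp (-(u/s)^2/2) := by
        rw [← Real.exp_add]; congr 1; ring
      calc g u * (c * ((Real.sqrt (2*Real.pi))⁻¹ * Real.exp (-(u/s'+1)^2/2)))
          = (Real.exp (((u/s'+1)^2 - (u/s)^2)/2) * Real.exp (-(u/s'+1)^2/2)) *
            (Real.sqrt (2*Real.pi) * (Real.sqrt (2*Real.pi))⁻¹) * (c / c) := by
            simp only [hgdef]; ring
        _ = Real.exp (-(u/s)^2/2) := by
            rw [h1, mul_inv_cancel₀ hsqrt_pos.ne', div_self hc.ne', mul_one, mul_one]
    calc A u ≤ Real.exp (-(u/s)^2/2) := step1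
      _ = g u * (c * ((Real.sqrt (2*Real.pi))⁻¹ * Real.exp (-(u/s'+1)^2/2))) := hg_eq.symm
      _ ≤ g u * B u := mul_le_mul_of_nonneg_left step2 (hg_nonneg u)
  have hAB0 : ∀ᶠ u in atTop, (0:ℝ) ≤ A u / B u := by
    filter_upwards [eventually_ge_atTop (0:ℝ)] with u hu
    exact div_nonneg (hA0 u) (hBpos u hu).le
  have hAB : Tendsto (fun u => A u / B u) atTop (nhds 0) :=
    tendsto_of_tendsto_of_tendsto_of_le_of_le' tendsto_const_nhds hg0 hAB0 hkey
  have hfinal : Tendsto (fun u => 1 + A u / B u) atTop (nhds 1) := by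
    have := tendsto_const_nhds (α := ℝ) (x := (1:ℝ)) (f := atTop) |>.add hAB
    simpa using this
  refine hfinal.congr' ?_
  filter_upwards [eventually_gt_atTop (0:ℝ)] with u hu
  rw [hnum u hu, add_div, div_self (hBpos u hu.le).ne']
  ring
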